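/- Let C₀ be a binary self-dual code of length n with generator matrix G₀ whose rows are r₁, …, r_{n/2}, and let x ∈ GF(2)^n have odd Hamming weight. Define yᵢ = x·rᵢ for each i. Then the code of length n+2 generated by the vector (1, 0, x) together with the vectors (yᵢ, yᵢ, rᵢ) for 1 ≤ i ≤ n/2 is self-dual of dimension n/2 + 1. -/

import Mathlib

open Finset

/-- Hamming weight of a binary vector. -/
def wt {n : ℕ} (v : Fin n → ZMod 2) : ℕ := (Finset.univ.filter (fun i => v i ≠ 0)).card

/-- Standard inner product over GF(2). -/
def inn {n : ℕ} (u v : Fin n → ZMod 2) : ZMod 2 := ∑ i, u i * v i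

/-- A code is self-dual if it equals its dual. -/
def IsSelfDual {n : ℕ} (C : Submodule (ZMod 2) (Fin n → ZMod 2)) : Prop :=
  ∀ v, v ∈ C ↔ ∀ c ∈ C, inn v c = 0

/-- `C` has minimum distance (weight) `d`. -/
def HasMinDist {n : ℕ} (C : Submodule (ZMod 2) (Fin n → ZMod 2)) (d : ℕ) : Prop :=
  (∃ c ∈ C, c ≠ 0 ∧ wt c = d) ∧ ∀ c ∈ C, c ≠ 0 → d ≤ wt c

/-- The shadow `S = C₀^⊥ \ C`, where `C₀` is the doubly-even subcode of `C`. -/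
def shadow {n : ℕ} (C : Submodule (ZMod 2) (Fin n → ZMod 2)) : Set (Fin n → ZMod 2) :=
  {v | ∀ c ∈ C, wt c % 4 = 0 → inn v c = 0} \ (C : Set (Fin n → ZMod 2))

/-- Covering radius of a code. -/
noncomputable def coveringRadius {n : ℕ} (C : Submodule (ZMod 2) (Fin n → ZMod 2)) : ℕ :=
  sInf {R | ∀ v : Fin n → ZMod 2, ∃ c ∈ C, wt (v - c) ≤ R}

/-- Prepend two coordinates to a vector. -/
def vcons2 {k : ℕ} (a b : ZMod 2) (v : Fin k → ZMod 2) : Fin (k + 2) → ZMod 2 :=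
  Fin.cons a (Fin.cons b v)

lemma inn_comm {n : ℕ} (u v : Fin n → ZMod 2) : inn u v = inn v u := by
  simp [inn, mul_comm]

lemma inn_add_left {n : ℕ} (u w z : Fin n → ZMod 2) :
    inn (u + w) z = inn u z + inn w z := by
  simp [inn, add_mul, Finset.sum_add_distrib]

lemma inn_smul_left {n : ℕ} (c : ZMod 2) (u z : Fin n → ZMod 2) :
    inn (c • u) z = c * inn u z := by
  simp [inn, Finset.mul_sum, mul_assoc]

/-- `inn v ·` as a linear map. -/
def innL {n : ℕ} (v : Fin n → ZMod 2) : (Fin n → ZMod 2) →ₗ[ZMod 2] ZMod 2 where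
  toFun w := inn v w
  map_add' a b := by simp [inn, mul_add, Finset.sum_add_distrib]
  map_smul' c a := by simp [inn, Finset.mul_sum, mul_left_comm]

lemma innL_apply {n : ℕ} (v w : Fin n → ZMod 2) : innL v w = inn v w := rfl

lemma inn_vcons2 {k : ℕ} (a b c d : ZMod 2) (u w : Fin k → ZMod 2) :
    inn (vcons2 a b u) (vcons2 c d w) = a*c + b*d + inn u w := by
  simp [inn, vcons2, Fin.sum_univ_succ, add_assoc]

lemma inn_self {n : ℕ} (v : Fin n → ZMod 2) : inn v v = (wt v : ZMod 2) := by
  have hsq : ∀ a : ZMod 2, a * a = a := by decide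
  have hone : ∀ a : ZMod 2, a ≠ 0 → a = 1 := by decide
  unfold inn wt
  rw [Finset.sum_congr rfl (fun i _ => hsq (v i))]
  rw [← Finset.sum_filter_ne_zero]
  rw [Finset.sum_congr rfl (fun i hi => hone (v i) (Finset.mem_filter.mp hi).2)]
  simp

/-- `u ↦ (inn x u, inn x u, u)` as a linear map. -/
def consF {k : ℕ} (x : Fin k → ZMod 2) :
    (Fin k → ZMod 2) →ₗ[ZMod 2] (Fin (k+2) → ZMod 2) where
  toFun u := vcons2 (inn x u) (inn x u) u
  map_add' u v := by
    funext j
    refine Fin.cases ?_ (fun j1 => Fin.cases ?_ (fun j2 => ?_) j1) j <;>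
      simp [vcons2, inn, mul_add, Finset.sum_add_distrib]
  map_smul' c u := by
    funext j
    refine Fin.cases ?_ (fun j1 => Fin.cases ?_ (fun j2 => ?_) j1) j <;>
      simp [vcons2, inn, Finset.mul_sum, mul_left_comm]

lemma two_mul_finrank_of_selfDual {n : ℕ} (C : Submodule (ZMod 2) (Fin n → ZMod 2))
    (h : IsSelfDual C) : 2 * Module.finrank (ZMod 2) C = n := by
  classical
  set b := Pi.basisFun (ZMod 2) (Fin n) with hb
  have key : ∀ v c : Fin n → ZMod 2, b.toDual v c = inn v c := by
    intro v c
    conv_lhs => rw [← b.sum_repr c]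
    rw [map_sum]
    simp only [map_smul, Module.Basis.toDual_eq_repr, smul_eq_mul]
    simp [hb, Pi.basisFun_repr, inn, mul_comm]
  have hCeq : C = (C.dualAnnihilator).comap b.toDualEquiv.toLinearMap := by
    ext v
    rw [Submodule.mem_comap, Submodule.mem_dualAnnihilator]
    simp only [LinearEquiv.coe_coe, Module.Basis.toDualEquiv_apply, key]
    exact h v
  have hmap : Submodule.map (b.toDualEquiv.toLinearMap) C = C.dualAnnihilator := by
    conv_lhs => rw [hCeq]
    exact Submodule.map_comap_eq_of_surjective b.toDualEquiv.surjective _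
  have h2 : Module.finrank (ZMod 2) C.dualAnnihilator = Module.finrank (ZMod 2) C := by
    rw [← hmap]
    exact ((b.toDualEquiv.submoduleMap C).finrank_eq).symm
  have h1 : Module.finrank (ZMod 2) C + Module.finrank (ZMod 2) C.dualAnnihilator = n := by
    have e : Module.finrank (ZMod 2) ((Fin n → ZMod 2) ⧸ C) =
        Module.finrank (ZMod 2) C.dualAnnihilator :=
      (Subspace.quotEquivAnnihilator C).finrank_eq
    have hq := Submodule.finrank_quotient_add_finrank C
    have hV : Module.finrank (ZMod 2) (Fin n → ZMod 2) = n := by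
      simp [Module.finrank_fintype_fun_eq_card]
    omega
  omega

theorem stmt_5 (m : ℕ)
    (C0 : Submodule (ZMod 2) (Fin (2*m) → ZMod 2)) (hC0 : IsSelfDual C0)
    (r : Fin m → Fin (2*m) → ZMod 2)
    (hr : Submodule.span (ZMod 2) (Set.range r) = C0)
    (x : Fin (2*m) → ZMod 2) (hx : wt x % 2 = 1) :
    IsSelfDual (Submodule.span (ZMod 2)
      (insert (vcons2 1 0 x)
        (Set.range fun i => vcons2 (inn x (r i)) (inn x (r i)) (r i)))) ∧
    Module.finrank (ZMod 2)
      ↥(Submodule.span (ZMod 2)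
        (insert (vcons2 1 0 x)
          (Set.range fun i => vcons2 (inn x (r i)) (inn x (r i)) (r i)))) = m + 1 := by
  classical
  set v0 : Fin (2*m+2) → ZMod 2 := vcons2 1 0 x with hv0def
  set w : Fin m → Fin (2*m+2) → ZMod 2 :=
    fun i => vcons2 (inn x (r i)) (inn x (r i)) (r i) with hwdef
  set gens : Set (Fin (2*m+2) → ZMod 2) := insert v0 (Set.range w) with hgens
  set C : Submodule (ZMod 2) (Fin (2*m+2) → ZMod 2) := Submodule.span (ZMod 2) gens with hCdef
  have h2 : (2 : ZMod 2) = 0 := by decide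
  have hxx : inn x x = 1 := by
    rw [inn_self, ← ZMod.natCast_mod, hx]; rfl
  have hrC0 : ∀ i, r i ∈ C0 := fun i => hr ▸ Submodule.subset_span ⟨i, rfl⟩
  have hC0orth : ∀ c ∈ C0, ∀ c' ∈ C0, inn c c' = 0 := fun c hc => (hC0 c).mp hc
  -- pairwise orthogonality of generators
  have hgg : ∀ g ∈ gens, ∀ g' ∈ gens, inn g g' = 0 := by
    rintro g (rfl | ⟨i, rfl⟩) g' (rfl | ⟨j, rfl⟩)
    · rw [hv0def, inn_vcons2, hxx]; decide
    · rw [hv0def, hwdef, inn_vcons2]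
      linear_combination inn x (r j) * h2
    · rw [hv0def, hwdef, inn_vcons2, inn_comm (r i) x]
      linear_combination inn x (r i) * h2
    · rw [hwdef, inn_vcons2, hC0orth _ (hrC0 i) _ (hrC0 j)]
      linear_combination (inn x (r i) * inn x (r j)) * h2
  have horth : ∀ c ∈ C, ∀ c' ∈ C, inn c c' = 0 := by
    have h1 : ∀ g ∈ gens, C ≤ LinearMap.ker (innL g) := by
      intro g hg
      rw [hCdef, Submodule.span_le]
      intro g' hg'
      simpa [LinearMap.mem_ker, innL_apply] using hgg g hg g' hg'
    intro c hc c' hc'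
    have hker : C ≤ LinearMap.ker (innL c') := by
      rw [hCdef, Submodule.span_le]
      intro g hg
      have := h1 g hg hc'
      simp only [SetLike.mem_coe, LinearMap.mem_ker, innL_apply, LinearMap.coe_mk,
        AddHom.coe_mk] at this ⊢
      rw [inn_comm]; exact this
    have := hker hc
    simp only [LinearMap.mem_ker, innL_apply, LinearMap.coe_mk, AddHom.coe_mk] at this
    rw [inn_comm]; exact this
  have hsd : IsSelfDual C := by
    intro v
    constructor
    · exact fun hv c hc => horth v hv c hc
    · intro hv
      -- decompose v
      set a : ZMod 2 := v 0 with ha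
      set b : ZMod 2 := Fin.tail v 0 with hbdef
      set u : Fin (2*m) → ZMod 2 := Fin.tail (Fin.tail v) with hu
      have hdec : v = vcons2 a b u := by
        rw [vcons2, hbdef, hu, Fin.cons_self_tail, ha, Fin.cons_self_tail]
      have hv0C : v0 ∈ C := Submodule.subset_span (Set.mem_insert _ _)
      have hwC : ∀ i, w i ∈ C := fun i =>
        Submodule.subset_span (Set.mem_insert_iff.mpr (Or.inr ⟨i, rfl⟩))
      have h0 : a * 1 + b * 0 + inn u x = 0 := by
        have := hv v0 hv0C
        rwa [hdec, hv0def, inn_vcons2] at this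
      have hi : ∀ i, a * inn x (r i) + b * inn x (r i) + inn u (r i) = 0 := by
        intro i
        have := hv (w i) (hwC i)
        rwa [hdec, hwdef, inn_vcons2] at this
      set u' : Fin (2*m) → ZMod 2 := u + (a + b) • x with hu'
      have hu'r : ∀ i, inn u' (r i) = 0 := by
        intro i
        rw [hu', inn_add_left, inn_smul_left]
        linear_combination hi i
      have hu'C0 : u' ∈ C0 := by
        apply (hC0 u').mpr
        intro c hc
        have hle : C0 ≤ LinearMap.ker (innL u') := by
          rw [← hr, Submodule.span_le]
          rintro _ ⟨i, rfl⟩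
          simpa [LinearMap.mem_ker, innL_apply] using hu'r i
        have := hle hc
        simpa [LinearMap.mem_ker, innL_apply] using this
      have hFC : consF x u' ∈ C := by
        have hle : C0 ≤ Submodule.comap (consF x) C := by
          rw [← hr, Submodule.span_le]
          rintro _ ⟨i, rfl⟩
          have : consF x (r i) = w i := by rw [hwdef]; rfl
          simpa [Submodule.mem_comap, this] using hwC i
        exact hle hu'C0
      have hxu' : inn x u' = b := by
        rw [inn_comm, hu', inn_add_left, inn_smul_left, hxx]
        linear_combination h0
      have hkey : v = (a + b) • v0 + consF x u' := by
        rw [hdec]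
        funext j
        refine Fin.cases ?_ (fun j1 => Fin.cases ?_ (fun j2 => ?_) j1) j
        · simp only [Pi.add_apply, Pi.smul_apply, smul_eq_mul, hv0def, consF,
            LinearMap.coe_mk, AddHom.coe_mk, vcons2, Fin.cons_zero, hxu']
          linear_combination -b * h2
        · simp only [Pi.add_apply, Pi.smul_apply, smul_eq_mul, hv0def, consF,
            LinearMap.coe_mk, AddHom.coe_mk, vcons2, Fin.cons_succ, Fin.cons_zero, hxu']
          ring
        · simp only [Pi.add_apply, Pi.smul_apply, smul_eq_mul, hv0def, consF,
            LinearMap.coe_mk, AddHom.coe_mk, vcons2, Fin.cons_succ, hu', Pi.add_apply,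
            Pi.smul_apply, smul_eq_mul]
          linear_combination (-(a + b) * x j2) * h2
      rw [hkey]
      exact Submodule.add_mem C (Submodule.smul_mem C _ hv0C) hFC
  refine ⟨hsd, ?_⟩
  have := two_mul_finrank_of_selfDual C hsd
  omega
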